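/- An element of SE₃, represented as a point of the group variety X ⊂ P¹⁶ with h ≠ 0, has order 2 if and only if its scalar part vanishes; equivalently, under the dual-quaternion model, a dual quaternion g with real nonzero norm represents an involution in SE₃ = S/ℝ* if and only if the coefficients of 1 and of ε in g are both zero. -/

import Mathlib

/-- The dual quaternions, as quaternions over the dual numbers. -/
abbrev DualQuat : Type := Quaternion (DualNumber ℝ)

/-- A dual quaternion `g` with real nonzero norm represents an element of order 2 of
`SE₃ = S/ℝ*` (its square is a nonzero real scalar, but `g` itself is not a real scalar)
if and only if its scalar part vanishes, i.e. the coefficients of `1` and of `ε` in `g`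
are both zero. -/
theorem involution_iff_scalar_part_vanishes (g : DualQuat) (n : ℝ) (hn : n ≠ 0)
    (hnorm : g * star g = (algebraMap ℝ DualQuat : ℝ →+* DualQuat) n) :
    ((∃ c : ℝ, c ≠ 0 ∧ g ^ 2 = (algebraMap ℝ DualQuat : ℝ →+* DualQuat) c) ∧
        ¬ ∃ c : ℝ, g = (algebraMap ℝ DualQuat : ℝ →+* DualQuat) c) ↔
      g.re.fst = 0 ∧ g.re.snd = 0 := by
  have hcoe : ∀ r : ℝ, (algebraMap ℝ DualQuat : ℝ →+* DualQuat) r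
      = ((algebraMap ℝ (DualNumber ℝ) r : DualNumber ℝ) : DualQuat) := fun r => rfl
  have h1 : g ^ 2 = (↑(2 * g.re) : DualQuat) * g - (algebraMap ℝ DualQuat : ℝ →+* DualQuat) n := by
    rw [sq, ← hnorm, ← star_comm_self', ← Quaternion.self_add_star', add_mul]
    abel
  constructor
  · rintro ⟨⟨c, hc, hsq⟩, hns⟩
    have hkey : (↑(2 * g.re) : DualQuat) * g = (algebraMap ℝ DualQuat : ℝ →+* DualQuat) (c + n) := by
      rw [map_add, ← hsq, h1, sub_add_cancel]
    -- re component of hkey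
    have hre : g.re * g.re + g.re * g.re = algebraMap ℝ (DualNumber ℝ) (c + n) := by
      have := congrArg QuaternionAlgebra.re hkey
      simp only [Quaternion.re_mul, Quaternion.re_coe, Quaternion.imI_coe, Quaternion.imJ_coe,
        Quaternion.imK_coe, zero_mul, sub_zero, hcoe, two_mul, add_mul] at this
      exact this
    set a := g.re.fst with ha'
    set b := g.re.snd with hb'
    have hfst : a * a + a * a = c + n := by
      have := congrArg TrivSqZeroExt.fst hre
      simpa [TrivSqZeroExt.algebraMap_eq_inl', TrivSqZeroExt.fst_mul] using this
    have hab : a * b = 0 := by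
      have := congrArg TrivSqZeroExt.snd hre
      simp [TrivSqZeroExt.algebraMap_eq_inl', TrivSqZeroExt.snd_mul, smul_eq_mul,
        mul_comm] at this
      rcases this with h | h
      · simp [ha', h]
      · simp [hb', h]
    by_cases hA : a = 0
    · refine ⟨hA, ?_⟩
      have hcn : c + n = 0 := by rw [← hfst, hA]; ring
      have hzero : (↑(2 * g.re) : DualQuat) * g = 0 := by
        rw [hkey, hcn, map_zero]
      by_contra hB
      have hrecoe : (2 * g.re) = (2 * b) • (TrivSqZeroExt.inr 1 : DualNumber ℝ) := by
        ext <;> simp [← ha', ← hb', hA, two_mul]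
      have hcomp : ∀ x : DualNumber ℝ, (2 * g.re) * x = 0 → x.fst = 0 := by
        intro x hx
        have := congrArg TrivSqZeroExt.snd hx
        rw [hrecoe] at this
        simp [TrivSqZeroExt.snd_mul, smul_eq_mul] at this
        rcases this with h | h
        · exact absurd h hB
        · exact h
      have hI : g.imI.fst = 0 := hcomp _ (by
        have := congrArg QuaternionAlgebra.imI hzero
        simpa [Quaternion.imI_mul, Quaternion.imI_zero] using this)
      have hJ : g.imJ.fst = 0 := hcomp _ (by
        have := congrArg QuaternionAlgebra.imJ hzero
        simpa [Quaternion.imJ_mul, Quaternion.imJ_zero] using this)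
      have hK : g.imK.fst = 0 := hcomp _ (by
        have := congrArg QuaternionAlgebra.imK hzero
        simpa [Quaternion.imK_mul, Quaternion.imK_zero] using this)
      have hnz : n = 0 := by
        have := congrArg (fun q : DualQuat => q.re.fst) hnorm
        simp [Quaternion.re_mul, hcoe, TrivSqZeroExt.fst_mul, TrivSqZeroExt.algebraMap_eq_inl',
          ← ha', hA, hI, hJ, hK] at this
        linarith [this]
      exact hn hnz
    · exfalso
      have hb0 : b = 0 := by
        rcases mul_eq_zero.mp hab with h | h
        · exact absurd h hA
        · exact h
      have hre2 : g.re = algebraMap ℝ (DualNumber ℝ) a := by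
        ext <;> simp [TrivSqZeroExt.algebraMap_eq_inl', ← ha', ← hb', hb0]
      apply hns
      refine ⟨(c + n) / (2 * a), ?_⟩
      have h2a : (2 * a : ℝ) ≠ 0 := by
        intro h; exact hA (by linarith [h])
      have hmap2 : algebraMap ℝ (DualNumber ℝ) (2 * a)
          = 2 * algebraMap ℝ (DualNumber ℝ) a := by
        rw [map_mul, map_ofNat]
      have hEq : (algebraMap ℝ DualQuat : ℝ →+* DualQuat) (2 * a) * g = (algebraMap ℝ DualQuat : ℝ →+* DualQuat) (c + n) := by
        rw [← hkey, hcoe, hmap2, ← hre2]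
      calc g = (algebraMap ℝ DualQuat : ℝ →+* DualQuat) ((2 * a)⁻¹ * (2 * a)) * g := by
              rw [inv_mul_cancel₀ h2a, map_one]; exact (one_mul g).symm
        _ = (algebraMap ℝ DualQuat : ℝ →+* DualQuat) (2 * a)⁻¹ * ((algebraMap ℝ DualQuat : ℝ →+* DualQuat) (2 * a) * g) := by
              rw [map_mul]; exact mul_assoc ((algebraMap ℝ DualQuat : ℝ →+* DualQuat) (2 * a)⁻¹) ((algebraMap ℝ DualQuat : ℝ →+* DualQuat) (2 * a)) g
        _ = (algebraMap ℝ DualQuat : ℝ →+* DualQuat) (2 * a)⁻¹ * (algebraMap ℝ DualQuat : ℝ →+* DualQuat) (c + n) := by rw [hEq]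
        _ = (algebraMap ℝ DualQuat : ℝ →+* DualQuat) ((c + n) / (2 * a)) := by
              rw [← map_mul]; congr 1; ring
  · rintro ⟨ha, hb⟩
    have hre0 : g.re = 0 := by ext <;> simp [ha, hb]
    constructor
    · refine ⟨-n, neg_ne_zero.mpr hn, ?_⟩
      rw [h1, hre0, mul_zero, map_neg]
      rw [show ((0 : DualNumber ℝ) : DualQuat) = 0 from rfl, zero_mul, zero_sub]
    · rintro ⟨c, hcg⟩
      have hrec : g.re = algebraMap ℝ (DualNumber ℝ) c := by rw [hcg, hcoe]; rfl
      have hc0 : c = 0 := by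
        have := congrArg TrivSqZeroExt.fst hrec
        simp [TrivSqZeroExt.algebraMap_eq_inl', ha] at this
        exact this.symm
      rw [hc0, map_zero] at hcg
      rw [hcg] at hnorm
      apply hn
      have := congrArg (fun q : DualQuat => q.re.fst) hnorm
      simp [hcoe, TrivSqZeroExt.algebraMap_eq_inl', Quaternion.re_mul] at this
      exact this.symm
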